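/- Let M be a topological space, F : M → M a map, λ ∈ ℂ with |λ| ≥ 1 and λ ≠ 1, and φ : M → ℂ a continuous function satisfying φ(F x) = λ·φ(x) for all x ∈ M. Let x̂ be a fixed point of F (F x̂ = x̂) and let x ∈ M belong to the stable set of x̂, i.e. Tendsto (fun n => F^[n] x) atTop (𝓝 x̂). Then φ(x) = φ(x̂) = 0. Hence the stable manifold W^s(x̂) = {x : F^[n] x → x̂} is contained in the level set {x : φ(x) = φ(x̂)} of the eigenfunction φ. -/

import Mathlib

open Filter Topology

/-- A continuous Koopman eigenfunction with eigenvalue of norm at least one (and `≠ 1`)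
vanishes on the stable set of a fixed point: the stable manifold `W^s(x̂)` lies in the
level set `{x : φ x = φ x̂}` of the eigenfunction. -/
theorem stable_set_in_level_set {M : Type*} [TopologicalSpace M] (F : M → M)
    (lam : ℂ) (hlam : 1 ≤ ‖lam‖) (hlam1 : lam ≠ 1)
    (φ : M → ℂ) (hφ : Continuous φ)
    (heig : ∀ x : M, φ (F x) = lam * φ x)
    (xh : M) (hfix : F xh = xh) (x : M)
    (hx : Tendsto (fun n => F^[n] x) atTop (𝓝 xh)) :
    φ x = φ xh ∧ φ xh = 0 := by
  have hxh : φ xh = 0 := by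
    have h := heig xh
    rw [hfix] at h
    have : (lam - 1) * φ xh = 0 := by linear_combination -h
    rcases mul_eq_zero.1 this with h' | h'
    · exact absurd (sub_eq_zero.1 h') hlam1
    · exact h'
  have hiter : ∀ n, φ (F^[n] x) = lam ^ n * φ x := by
    intro n
    induction n with
    | zero => simp
    | succ n ih => rw [Function.iterate_succ_apply', heig, ih, pow_succ]; ring
  have htend : Tendsto (fun n => lam ^ n * φ x) atTop (𝓝 0) := by
    have h2 := (hφ.tendsto xh).comp hx
    rw [hxh] at h2
    refine h2.congr fun n => ?_
    simp [Function.comp, hiter]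
  have habs : Tendsto (fun n => ‖lam ^ n * φ x‖) atTop (𝓝 0) := by
    simpa using htend.norm
  have hge : ∀ n : ℕ, ‖φ x‖ ≤ ‖lam ^ n * φ x‖ := by
    intro n
    rw [norm_mul, norm_pow]
    have h1 : (1:ℝ) ≤ ‖lam‖ ^ n := one_le_pow₀ hlam
    nlinarith [norm_nonneg (φ x)]
  have : ‖φ x‖ ≤ 0 :=
    le_of_tendsto_of_tendsto' tendsto_const_nhds habs hge
  have hx0 : φ x = 0 := by
    have := le_antisymm this (norm_nonneg _)
    exact norm_eq_zero.1 this
  exact ⟨by rw [hx0, hxh], hxh⟩
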